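/- Suppose Ric_G(e) > 0. Then there exists a set E' ⊆ E(G) of edges, none incident to u or v, with Ric_{G−E'}(e) < 0 if and only if Ric_{G°}(e) < 0, where G° is the graph obtained from G by deleting every edge {u',v'} ∈ E(G) with u' ∉ {u,v} and v' ∉ {u,v}. -/

import Mathlib

open Finset
open scoped Classical

variable {V : Type*}

/-- The open neighborhood of `u` in `G`, as a finset. -/
noncomputable def nbrF [Fintype V] (G : SimpleGraph V) (u : V) : Finset V :=
  Finset.univ.filter fun x => G.Adj u x

/-- The degree of `u` in `G`. -/
noncomputable def degG [Fintype V] (G : SimpleGraph V) (u : V) : ℕ := (nbrF G u).card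

/-- The closed neighborhood `N[u]` of `u` in `G`. -/
noncomputable def cnbr [Fintype V] (G : SimpleGraph V) (u : V) : Finset V :=
  insert u (nbrF G u)

/-- A transport plan for `(G,u,v)`: nonnegative, with row sums `1/(deg u + 1)` over
`N[u]` and column sums `1/(deg v + 1)` over `N[v]`. -/
def IsPlanG [Fintype V] (G : SimpleGraph V) (u v : V) (z : V → V → ℝ) : Prop :=
  (∀ x y, 0 ≤ z x y) ∧
  (∀ x ∈ cnbr G u, ∑ y ∈ cnbr G v, z x y = 1 / ((degG G u : ℝ) + 1)) ∧
  (∀ y ∈ cnbr G v, ∑ x ∈ cnbr G u, z x y = 1 / ((degG G v : ℝ) + 1))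

/-- The cost of a transport plan, with respect to shortest-path distance in `G`. -/
noncomputable def planCostG [Fintype V] (G : SimpleGraph V) (u v : V) (z : V → V → ℝ) : ℝ :=
  ∑ x ∈ cnbr G u, ∑ y ∈ cnbr G v, (G.dist x y : ℝ) * z x y

/-- The earth mover's distance `EMD_G(u,v)`: the minimum cost of a transport plan. -/
noncomputable def EMDG [Fintype V] (G : SimpleGraph V) (u v : V) : ℝ :=
  sInf {t | ∃ z, IsPlanG G u v z ∧ planCostG G u v z = t}

/-- The Ollivier–Ricci curvature of the edge `{u,v}`. -/
noncomputable def RicG [Fintype V] (G : SimpleGraph V) (u v : V) : ℝ :=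
  1 - EMDG G u v

/-- The graph obtained from `G` by deleting every edge `{u',v'}` with
`u' ∉ {u,v}` and `v' ∉ {u,v}`. -/
def delInner (G : SimpleGraph V) (u v : V) : SimpleGraph V where
  Adj x y := G.Adj x y ∧ (x = u ∨ x = v ∨ y = u ∨ y = v)
  symm := by
    constructor
    intro x y h
    exact ⟨h.1.symm, by tauto⟩
  loopless := by
    constructor
    intro x h
    exact G.irrefl h.1


section auxlemmas
variable [Fintype V]

lemma nbrF_sandwich {G G' : SimpleGraph V} {u v : V}
    (h1 : delInner G u v ≤ G') (h2 : G' ≤ G) (w : V) (hw : w = u ∨ w = v) :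
    nbrF G' w = nbrF G w := by
  ext x
  simp only [nbrF, mem_filter, mem_univ, true_and]
  exact ⟨fun h => h2 h, fun h => h1 ⟨h, by tauto⟩⟩

lemma card_cnbr (G : SimpleGraph V) (w : V) : (cnbr G w).card = degG G w + 1 := by
  rw [cnbr, Finset.card_insert_of_notMem, degG]
  simp [nbrF]

lemma exists_plan (G : SimpleGraph V) (u v : V) : ∃ z, IsPlanG G u v z := by
  refine ⟨fun _ _ => (1 / ((degG G u : ℝ) + 1)) * (1 / ((degG G v : ℝ) + 1)), ?_, ?_, ?_⟩
  · intro x y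
    positivity
  · intro x hx
    rw [Finset.sum_const, card_cnbr, nsmul_eq_mul]
    have hv : ((degG G v : ℝ) + 1) ≠ 0 := by positivity
    push_cast
    field_simp
  · intro y hy
    rw [Finset.sum_const, card_cnbr, nsmul_eq_mul]
    have hu : ((degG G u : ℝ) + 1) ≠ 0 := by positivity
    push_cast
    field_simp

lemma planCost_nonneg (G : SimpleGraph V) (u v : V) (z : V → V → ℝ)
    (hz : ∀ x y, 0 ≤ z x y) : 0 ≤ planCostG G u v z := by
  apply Finset.sum_nonneg
  intro x _
  apply Finset.sum_nonneg
  intro y _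
  exact mul_nonneg (by positivity) (hz x y)

end auxlemmas

section mainlemmas
variable [Fintype V]

lemma reach_delInner {G : SimpleGraph V} {u v : V} (huv : G.Adj u v)
    {x y : V} (hx : x ∈ cnbr G u) (hy : y ∈ cnbr G v) :
    (delInner G u v).Reachable x y := by
  have huvD : (delInner G u v).Adj u v := ⟨huv, Or.inl rfl⟩
  have hxu : (delInner G u v).Reachable x u := by
    rcases Finset.mem_insert.1 hx with h | h
    · subst h; exact SimpleGraph.Reachable.refl x
    · have hadj : (delInner G u v).Adj u x :=
        ⟨by simpa [nbrF] using h, Or.inl rfl⟩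
      exact hadj.symm.reachable
  have hvy : (delInner G u v).Reachable v y := by
    rcases Finset.mem_insert.1 hy with h | h
    · subst h; exact SimpleGraph.Reachable.refl _
    · have hadj : (delInner G u v).Adj v y :=
        ⟨by simpa [nbrF] using h, Or.inr (Or.inl rfl)⟩
      exact hadj.reachable
  exact hxu.trans (huvD.reachable.trans hvy)

lemma Ric_le_of_sandwich {G G' : SimpleGraph V} {u v : V} (huv : G.Adj u v)
    (h1 : delInner G u v ≤ G') (h2 : G' ≤ G) :
    RicG (delInner G u v) u v ≤ RicG G' u v := by
  set D := delInner G u v with hD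
  have hDle : D ≤ G := fun a b hab => hab.1
  have hcu : cnbr G' u = cnbr G u := by
    rw [cnbr, cnbr, nbrF_sandwich h1 h2 u (Or.inl rfl)]
  have hcv : cnbr G' v = cnbr G v := by
    rw [cnbr, cnbr, nbrF_sandwich h1 h2 v (Or.inr rfl)]
  have hdu : degG G' u = degG G u := by
    rw [degG, degG, nbrF_sandwich h1 h2 u (Or.inl rfl)]
  have hdv : degG G' v = degG G v := by
    rw [degG, degG, nbrF_sandwich h1 h2 v (Or.inr rfl)]
  have hcuD : cnbr D u = cnbr G u := by
    rw [cnbr, cnbr, nbrF_sandwich (le_refl D) hDle u (Or.inl rfl)]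
  have hcvD : cnbr D v = cnbr G v := by
    rw [cnbr, cnbr, nbrF_sandwich (le_refl D) hDle v (Or.inr rfl)]
  have hduD : degG D u = degG G u := by
    rw [degG, degG, nbrF_sandwich (le_refl D) hDle u (Or.inl rfl)]
  have hdvD : degG D v = degG G v := by
    rw [degG, degG, nbrF_sandwich (le_refl D) hDle v (Or.inr rfl)]
  have hplan : ∀ z, IsPlanG D u v z ↔ IsPlanG G' u v z := by
    intro z
    simp only [IsPlanG, hcu, hcv, hdu, hdv, hcuD, hcvD, hduD, hdvD]
  have hcost : ∀ z, (∀ x y, 0 ≤ z x y) →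
      planCostG G' u v z ≤ planCostG D u v z := by
    intro z hz
    rw [planCostG, planCostG, hcu, hcv, hcuD, hcvD]
    apply Finset.sum_le_sum
    intro x hx
    apply Finset.sum_le_sum
    intro y hy
    apply mul_le_mul_of_nonneg_right _ (hz x y)
    exact_mod_cast (reach_delInner huv hx hy).dist_anti h1
  -- EMDG G' ≤ EMDG D
  have hEMD : EMDG G' u v ≤ EMDG D u v := by
    rw [EMDG, EMDG]
    apply le_csInf
    · obtain ⟨z, hzp⟩ := exists_plan D u v
      exact ⟨planCostG D u v z, z, hzp, rfl⟩
    · rintro t ⟨z, hzp, rfl⟩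
      have hmem : planCostG G' u v z ∈
          {t | ∃ z', IsPlanG G' u v z' ∧ planCostG G' u v z' = t} :=
        ⟨z, (hplan z).1 hzp, rfl⟩
      have hbdd : BddBelow {t | ∃ z', IsPlanG G' u v z' ∧ planCostG G' u v z' = t} := by
        refine ⟨0, ?_⟩
        rintro s ⟨z', hz', rfl⟩
        exact planCost_nonneg G' u v z' hz'.1
      exact le_trans (csInf_le hbdd hmem) (hcost z hzp.1)
  rw [RicG, RicG]
  linarith

end mainlemmas

/-- if `Ric_G(e) > 0`, then some set `E' ⊆ E(G)` of edges not incident to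
`u` or `v` has `Ric_{G−E'}(e) < 0` iff `Ric_{G°}(e) < 0`, where `G°` deletes all edges
avoiding `u` and `v`.  (A graph `G'` with `G° ≤ G' ≤ G` is exactly a graph of the form
`G − E'` for such a set `E'`.) -/
theorem stmt13 [Fintype V] (G : SimpleGraph V) (u v : V) (huv : G.Adj u v)
    (hdeg : degG G u ≤ degG G v) (hpos : 0 < RicG G u v) :
    (∃ G' : SimpleGraph V, delInner G u v ≤ G' ∧ G' ≤ G ∧ RicG G' u v < 0) ↔
      RicG (delInner G u v) u v < 0 := by
  constructor
  · rintro ⟨G', h1, h2, hneg⟩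
    exact lt_of_le_of_lt (Ric_le_of_sandwich huv h1 h2) hneg
  · intro h
    exact ⟨delInner G u v, le_refl _, fun a b hab => hab.1, h⟩
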